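/- Let k be a sufficiently large integer and let {A, B} be a balanced cut of the k × k grid graph (both |A| and |B| at least k²/3). Then there is an induced matching of size ⌊k/6⌋ across the cut: distinct vertices x_1,…,x_m ∈ A and y_1,…,y_m ∈ B with m = ⌊k/6⌋ such that x_i is adjacent to y_j in the grid if and only if i = j. Consequently the cut-rank satisfies ρ(A) ≥ ⌊k/6⌋ and the union-count satisfies U(A) ≥ 2^{⌊k/6⌋}, which yields the paper's claim that the boolean-width of the k × k grid is at least k/6. -/

import Mathlib

open Classical in
/-- The cut matrix of `A`: rows indexed by `A`, columns by its complement, over GF(2),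
with `(x,y)` entry `1` iff `x` and `y` are adjacent. -/
noncomputable def cutMatrix {V : Type*} [Fintype V] [DecidableEq V]
    (G : SimpleGraph V) (A : Finset V) : Matrix ↥A ↥(Aᶜ) (ZMod 2) :=
  Matrix.of fun x y => if G.Adj x.1 y.1 then 1 else 0

/-- The cut-rank `ρ_G(A)`: the GF(2)-rank of the cut matrix of `A`. -/
noncomputable def cutRank {V : Type*} [Fintype V] [DecidableEq V]
    (G : SimpleGraph V) (A : Finset V) : ℕ :=
  (cutMatrix G A).rank

/-- The union-count `U_G(A)`: the number of distinct sets `N(Y) \ A` over `Y ⊆ A`. -/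
noncomputable def unionCount {V : Type*} [Fintype V] [DecidableEq V]
    (G : SimpleGraph V) (A : Finset V) : ℕ :=
  Set.ncard {S : Set V | ∃ Y : Set V, Y ⊆ ↑A ∧ (⋃ y ∈ Y, G.neighborSet y) \ ↑A = S}

/-- `nss_G(A)`: the number of distinct GF(2)-linear spans of subsets of rows of the
cut matrix of `A`. -/
noncomputable def nss {V : Type*} [Fintype V] [DecidableEq V]
    (G : SimpleGraph V) (A : Finset V) : ℕ :=
  Set.ncard {W : Submodule (ZMod 2) (↥(Aᶜ) → ZMod 2) |
    ∃ S : Set ↥A, W = Submodule.span (ZMod 2) ((fun x => cutMatrix G A x) '' S)}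

/-- The `k × k` grid graph: vertex set `Fin k × Fin k`, with `(i,j)` adjacent to
`(i',j')` iff `|i − i'| + |j − j'| = 1`. -/
def gridGraph (k : ℕ) : SimpleGraph (Fin k × Fin k) where
  Adj x y := Nat.dist (x.1 : ℕ) (y.1 : ℕ) + Nat.dist (x.2 : ℕ) (y.2 : ℕ) = 1
  symm := by
    refine ⟨?_⟩
    intro x y h
    simpa [Nat.dist_comm] using h
  loopless := by
    refine ⟨?_⟩
    intro x h
    simp [Nat.dist_self] at h

/-! ### Auxiliary lemmas -/

lemma matching_rank {V : Type*} [Fintype V] [DecidableEq V]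
    (G : SimpleGraph V) (A : Finset V) {m : ℕ} (x y : Fin m → V)
    (hxA : ∀ i, x i ∈ A) (hyA : ∀ i, y i ∉ A)
    (hadj : ∀ i j, G.Adj (x i) (y j) ↔ i = j) :
    m ≤ cutRank G A := by
  classical
  set M := cutMatrix G A with hM
  have hyC : ∀ i, y i ∈ Aᶜ := fun i => Finset.mem_compl.2 (hyA i)
  set v : Fin m → (↥(Aᶜ) → ZMod 2) := fun i => M ⟨x i, hxA i⟩ with hv
  have hval : ∀ i j : Fin m, v i ⟨y j, hyC j⟩ = if i = j then 1 else 0 := by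
    intro i j
    simp only [hv, hM, cutMatrix, Matrix.of_apply]
    by_cases h : i = j
    · simp [h, (hadj j j).2 rfl]
    · simpa [h] using fun hh => h ((hadj i j).1 hh)
  have hli : LinearIndependent (ZMod 2) v := by
    let φ : (↥(Aᶜ) → ZMod 2) →ₗ[ZMod 2] (Fin m → ZMod 2) :=
      LinearMap.pi fun j => LinearMap.proj ⟨y j, hyC j⟩
    have hcomp : φ ∘ v = fun i => (Pi.single i 1 : Fin m → ZMod 2) := by
      funext i
      funext j
      simp only [Function.comp_apply, φ, LinearMap.pi_apply, LinearMap.proj_apply]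
      rw [hval i j, Pi.single_apply]
      exact if_congr eq_comm rfl rfl
    have : LinearIndependent (ZMod 2) (φ ∘ v) := by
      rw [hcomp]
      have h2 : (fun i => (Pi.single i 1 : Fin m → ZMod 2)) = ⇑(Pi.basisFun (ZMod 2) (Fin m)) := by
        funext i
        simp [Pi.basisFun_apply]
      rw [h2]
      exact (Pi.basisFun (ZMod 2) (Fin m)).linearIndependent
    exact LinearIndependent.of_comp φ this
  have hrank : cutRank G A = Module.finrank (ZMod 2) (Submodule.span (ZMod 2) (Set.range M)) :=
    Matrix.rank_eq_finrank_span_row M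
  have hle : Submodule.span (ZMod 2) (Set.range v) ≤ Submodule.span (ZMod 2) (Set.range M) := by
    apply Submodule.span_mono
    rintro _ ⟨i, rfl⟩
    exact ⟨⟨x i, hxA i⟩, rfl⟩
  calc m = Module.finrank (ZMod 2) (Submodule.span (ZMod 2) (Set.range v)) := by
        rw [finrank_span_eq_card hli, Fintype.card_fin]
    _ ≤ Module.finrank (ZMod 2) (Submodule.span (ZMod 2) (Set.range M)) :=
        Submodule.finrank_mono hle
    _ = cutRank G A := hrank.symm

lemma matching_union {V : Type*} [Fintype V] [DecidableEq V]
    (G : SimpleGraph V) (A : Finset V) {m : ℕ} (x y : Fin m → V)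
    (hxA : ∀ i, x i ∈ A) (hyA : ∀ i, y i ∉ A)
    (hadj : ∀ i j, G.Adj (x i) (y j) ↔ i = j) :
    2 ^ m ≤ unionCount G A := by
  classical
  set T : Set (Set V) := {S : Set V | ∃ Y : Set V, Y ⊆ ↑A ∧ (⋃ y ∈ Y, G.neighborSet y) \ ↑A = S}
    with hT
  set F : Set (Fin m) → Set V := fun s => (⋃ v ∈ x '' s, G.neighborSet v) \ ↑A with hF
  have hmem : ∀ s, F s ∈ T := by
    intro s
    exact ⟨x '' s, by rintro _ ⟨i, _, rfl⟩; exact hxA i, rfl⟩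
  have hkey : ∀ s (i : Fin m), y i ∈ F s ↔ i ∈ s := by
    intro s i
    constructor
    · rintro ⟨hmem, -⟩
      simp only [Set.mem_iUnion] at hmem
      obtain ⟨v, ⟨j, hj, rfl⟩, hadj'⟩ := hmem
      rw [SimpleGraph.mem_neighborSet, hadj j i] at hadj'
      exact hadj' ▸ hj
    · intro hi
      refine ⟨?_, fun h => hyA i h⟩
      simp only [Set.mem_iUnion]
      exact ⟨x i, ⟨i, hi, rfl⟩, (hadj i i).2 rfl⟩
  have hinj : Function.Injective F := by
    intro s t hst
    ext i
    rw [← hkey s i, hst, hkey t i]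
  have hsub : Set.range F ⊆ T := by rintro _ ⟨s, rfl⟩; exact hmem s
  have h1 : (Set.range F).ncard ≤ T.ncard := Set.ncard_le_ncard hsub (Set.toFinite T)
  have h2 : (Set.range F).ncard = 2 ^ m := by
    rw [← Nat.card_coe_set_eq, Nat.card_range_of_injective hinj,
      Nat.card_eq_fintype_card, Fintype.card_set, Fintype.card_fin]
  calc 2 ^ m = (Set.range F).ncard := h2.symm
    _ ≤ T.ncard := h1

open Classical in
lemma flip_nat (P : ℕ → Prop) : ∀ (d a : ℕ), P a → ¬ P (a + d) →
    ∃ n, a ≤ n ∧ n + 1 ≤ a + d ∧ P n ∧ ¬ P (n + 1) := by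
  intro d
  induction d with
  | zero => intro a ha hb; exact absurd ha hb
  | succ d ih =>
    intro a ha hb
    by_cases h : P (a + d)
    · exact ⟨a + d, Nat.le_add_right a d, by omega, h, by rwa [Nat.add_succ] at hb⟩
    · obtain ⟨n, h1, h2, h3, h4⟩ := ih a ha h
      exact ⟨n, h1, by omega, h3, h4⟩

open Classical in
lemma cross_pair {k : ℕ} (P : Fin k → Prop) (u v : Fin k) (hu : P u) (hv : ¬ P v) :
    ∃ s t : Fin k, Nat.dist (s : ℕ) (t : ℕ) = 1 ∧ P s ∧ ¬ P t := by
  set Q : ℕ → Prop := fun n => if h : n < k then P ⟨n, h⟩ else False with hQ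
  have hQu : Q (u : ℕ) := by simp [hQ, u.isLt, hu]
  have hQv : ¬ Q (v : ℕ) := by simp [hQ, v.isLt]; exact hv
  rcases le_or_gt (u : ℕ) (v : ℕ) with h | h
  · obtain ⟨d, hd⟩ := Nat.exists_eq_add_of_le h
    obtain ⟨n, h1, h2, h3, h4⟩ := flip_nat Q d u hQu (by rwa [← hd])
    have hv' := v.isLt
    have hn1k : n + 1 < k := by omega
    refine ⟨⟨n, by omega⟩, ⟨n + 1, hn1k⟩, by simp [Nat.dist], ?_, ?_⟩
    · simpa [hQ, show n < k by omega] using h3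
    · intro hP; exact h4 (by simp [hQ, hn1k, hP])
  · obtain ⟨d, hd⟩ := Nat.exists_eq_add_of_le (le_of_lt h)
    obtain ⟨n, h1, h2, h3, h4⟩ := flip_nat (fun n => ¬ Q n) d v hQv
      (by rw [← hd]; exact not_not_intro hQu)
    push_neg at h4
    have hu' := u.isLt
    have hn1k : n + 1 < k := by omega
    refine ⟨⟨n + 1, hn1k⟩, ⟨n, by omega⟩, by simp [Nat.dist], ?_, ?_⟩
    · simpa [hQ, hn1k] using h4
    · intro hP; exact h3 (by simp [hQ, show n < k by omega, hP])

lemma construct {k : ℕ} (A : Finset (Fin k × Fin k)) (R : Finset (Fin k))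
    (hR : k ≤ 3 * R.card)
    (line : Fin k × Fin k → Fin k)
    (hline : ∀ a b, (gridGraph k).Adj a b → Nat.dist ((line a : ℕ)) ((line b : ℕ)) ≤ 1)
    (pair : ∀ r ∈ R, ∃ p q : Fin k × Fin k,
      (gridGraph k).Adj p q ∧ p ∈ A ∧ q ∉ A ∧ line p = r ∧ line q = r) :
    ∃ x y : Fin (k / 6) → Fin k × Fin k,
      Function.Injective x ∧ Function.Injective y ∧
      (∀ i, x i ∈ A) ∧ (∀ i, y i ∉ A) ∧
      (∀ i j, (gridGraph k).Adj (x i) (y j) ↔ i = j) := by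
  classical
  set m := k / 6 with hm
  have h2m : 2 * m ≤ R.card := by
    omega
  have hidx : ∀ i : Fin m, 2 * (i : ℕ) + 1 < R.card := by
    intro i; have := i.isLt; omega
  let e := R.orderIsoOfFin rfl
  let r : Fin m → Fin k := fun i => (e ⟨2 * (i : ℕ), by have := hidx i; omega⟩ : Fin k)
  have hrR : ∀ i, r i ∈ R := fun i => (e _).2
  have hgap : ∀ i j : Fin m, i ≠ j → 2 ≤ Nat.dist ((r i : ℕ)) ((r j : ℕ)) := by
    have key : ∀ i j : Fin m, (i : ℕ) < (j : ℕ) → ((r i : ℕ)) + 2 ≤ ((r j : ℕ)) := by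
      intro i j hij
      have h1 : e ⟨2 * (i : ℕ), by have := hidx i; omega⟩ < e ⟨2 * (i : ℕ) + 1, hidx i⟩ :=
        e.strictMono (by simp [Fin.lt_def])
      have h2 : e ⟨2 * (i : ℕ) + 1, hidx i⟩ < e ⟨2 * (j : ℕ), by have := hidx j; omega⟩ :=
        e.strictMono (by simp [Fin.lt_def]; omega)
      have h1' : ((e ⟨2 * (i : ℕ), by have := hidx i; omega⟩ : Fin k) : ℕ)
          < ((e ⟨2 * (i : ℕ) + 1, hidx i⟩ : Fin k) : ℕ) := h1
      have h2' : ((e ⟨2 * (i : ℕ) + 1, hidx i⟩ : Fin k) : ℕ)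
          < ((e ⟨2 * (j : ℕ), by have := hidx j; omega⟩ : Fin k) : ℕ) := h2
      simp only [r]
      omega
    intro i j hij
    rcases lt_or_gt_of_ne (fun h : (i : ℕ) = (j : ℕ) => hij (Fin.ext h)) with h | h
    · have := key i j h; simp only [Nat.dist]; omega
    · have := key j i h; simp only [Nat.dist]; omega
  have hpair : ∀ i : Fin m, ∃ p q : Fin k × Fin k,
      (gridGraph k).Adj p q ∧ p ∈ A ∧ q ∉ A ∧ line p = r i ∧ line q = r i :=
    fun i => pair (r i) (hrR i)
  choose x y hadj hxA hyA hlx hly using hpair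
  refine ⟨x, y, ?_, ?_, hxA, hyA, ?_⟩
  · intro i j hxy
    by_contra hne
    have := hgap i j hne
    rw [← hlx i, ← hlx j, hxy, Nat.dist_self] at this
    omega
  · intro i j hxy
    by_contra hne
    have := hgap i j hne
    rw [← hly i, ← hly j, hxy, Nat.dist_self] at this
    omega
  · intro i j
    constructor
    · intro hA
      by_contra hne
      have h1 := hline _ _ hA
      rw [hlx i, hly j] at h1
      have := hgap i j hne
      omega
    · rintro rfl
      exact hadj i

section Counting
variable {k : ℕ} (A : Finset (Fin k × Fin k))

/-- number of elements of `A` in row `i` -/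
noncomputable def rowc (i : Fin k) : ℕ := (A.filter fun v => v.1 = i).card

lemma rowc_le (i : Fin k) : rowc A i ≤ k := by
  classical
  have : rowc A i ≤ (Finset.univ : Finset (Fin k)).card := by
    apply Finset.card_le_card_of_injOn (fun v => v.2) (fun v _ => Finset.mem_univ _)
    intro a ha b hb hab
    simp only [Finset.mem_coe, Finset.mem_filter] at ha hb
    exact Prod.ext (ha.2.trans hb.2.symm) hab
  simpa using this

lemma rowc_sum : ∑ i : Fin k, rowc A i = A.card := by
  classical
  exact (Finset.card_eq_sum_card_fiberwise (fun v _ => Finset.mem_univ v.1)).symm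

lemma rowc_pos_mem {i : Fin k} (h : 0 < rowc A i) : ∃ j, (i, j) ∈ A := by
  classical
  obtain ⟨v, hv⟩ := Finset.card_pos.1 h
  simp only [Finset.mem_filter] at hv
  exact ⟨v.2, by rw [← hv.2]; exact hv.1⟩

lemma rowc_lt_mem {i : Fin k} (h : rowc A i < k) : ∃ j, (i, j) ∉ A := by
  classical
  by_contra hc
  push_neg at hc
  have hsub : (Finset.univ.image fun j => (i, j)) ⊆ A.filter fun v => v.1 = i := by
    intro v hv
    simp only [Finset.mem_image] at hv
    obtain ⟨j, _, rfl⟩ := hv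
    exact Finset.mem_filter.2 ⟨hc j, rfl⟩
  have hcard : ((Finset.univ : Finset (Fin k)).image fun j => (i, j)).card = k := by
    rw [Finset.card_image_of_injective _
      (fun a b hab => (Prod.ext_iff.1 hab).2)]
    simp
  have := Finset.card_le_card hsub
  rw [hcard] at this
  exact absurd (lt_of_lt_of_le h this) (lt_irrefl _)

lemma rowc_eq_mem {i : Fin k} (h : rowc A i = k) : ∀ j, (i, j) ∈ A := by
  classical
  intro j
  have hsub : (A.filter fun v => v.1 = i) ⊆ Finset.univ.image fun j => (i, j) := by
    intro v hv
    simp only [Finset.mem_filter] at hv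
    exact Finset.mem_image.2 ⟨v.2, Finset.mem_univ _, by rw [← hv.2]⟩
  have hcard : ((Finset.univ : Finset (Fin k)).image fun j => (i, j)).card = k := by
    rw [Finset.card_image_of_injective _
      (fun a b hab => (Prod.ext_iff.1 hab).2)]
    simp
  have heq : (A.filter fun v => v.1 = i) = Finset.univ.image fun j => (i, j) :=
    Finset.eq_of_subset_of_card_le hsub (by rw [hcard]; exact h.ge)
  have : (i, j) ∈ A.filter fun v => v.1 = i := by
    rw [heq]; exact Finset.mem_image.2 ⟨j, Finset.mem_univ _, rfl⟩
  exact (Finset.mem_filter.1 this).1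

lemma rowc_zero_mem {i : Fin k} (h : rowc A i = 0) : ∀ j, (i, j) ∉ A := by
  classical
  intro j hj
  have : (i, j) ∈ A.filter fun v => v.1 = i := Finset.mem_filter.2 ⟨hj, rfl⟩
  rw [Finset.card_eq_zero.1 h] at this
  exact absurd this (Finset.notMem_empty _)

open Classical in
lemma counting (hk : 0 < k) (hA : k * k ≤ 3 * A.card) (hB : 3 * A.card ≤ 2 * (k * k)) :
    (k ≤ 3 * (Finset.univ.filter fun i : Fin k => 0 < rowc A i ∧ rowc A i < k).card) ∨
    ((∃ ra : Fin k, rowc A ra = k) ∧ (∃ rb : Fin k, rowc A rb = 0)) := by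
  classical
  set Mr := Finset.univ.filter fun i : Fin k => 0 < rowc A i ∧ rowc A i < k with hMr
  set Pa := Finset.univ.filter fun i : Fin k => rowc A i = k with hPa
  set Pb := Finset.univ.filter fun i : Fin k => rowc A i = 0 with hPb
  by_cases hcase : k ≤ 3 * Mr.card
  · exact Or.inl hcase
  right
  have hA1 : A.card ≤ k * (Pa.card + Mr.card) := by
    calc A.card = ∑ i : Fin k, rowc A i := (rowc_sum A).symm
      _ = ∑ i ∈ Pa ∪ Mr, rowc A i := by
          refine (Finset.sum_subset (Finset.subset_univ _) ?_).symm
          intro i _ hi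
          simp only [hPa, hPb, hMr, Finset.mem_union, Finset.mem_filter, Finset.mem_univ,
            true_and] at hi
          push_neg at hi
          have h1 := rowc_le A i
          omega
      _ ≤ ∑ _i ∈ Pa ∪ Mr, k := Finset.sum_le_sum fun i _ => rowc_le A i
      _ = (Pa ∪ Mr).card * k := by rw [Finset.sum_const, smul_eq_mul]
      _ ≤ (Pa.card + Mr.card) * k := Nat.mul_le_mul_right k (Finset.card_union_le _ _)
      _ = k * (Pa.card + Mr.card) := Nat.mul_comm _ _
  have hsumB : ∑ i : Fin k, (k - rowc A i) = k * k - A.card := by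
    have h1 : ∑ i : Fin k, (k - rowc A i) + ∑ i : Fin k, rowc A i = k * k := by
      rw [← Finset.sum_add_distrib]
      have : ∀ i : Fin k, k - rowc A i + rowc A i = k := fun i => by
        have := rowc_le A i; omega
      simp only [this]
      simp [Finset.sum_const, Nat.mul_comm]
    rw [rowc_sum] at h1
    omega
  have hAcard : A.card ≤ k * k := by
    calc A.card = ∑ i : Fin k, rowc A i := (rowc_sum A).symm
      _ ≤ ∑ _i : Fin k, k := Finset.sum_le_sum fun i _ => rowc_le A i
      _ = k * k := by simp [Nat.mul_comm]
  have hB1 : k * k - A.card ≤ k * (Pb.card + Mr.card) := by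
    calc k * k - A.card = ∑ i : Fin k, (k - rowc A i) := hsumB.symm
      _ = ∑ i ∈ Pb ∪ Mr, (k - rowc A i) := by
          refine (Finset.sum_subset (Finset.subset_univ _) ?_).symm
          intro i _ hi
          simp only [hPb, hMr, Finset.mem_union, Finset.mem_filter, Finset.mem_univ,
            true_and] at hi
          push_neg at hi
          have h1 := rowc_le A i
          omega
      _ ≤ ∑ _i ∈ Pb ∪ Mr, k := Finset.sum_le_sum fun i _ => Nat.sub_le _ _
      _ = (Pb ∪ Mr).card * k := by rw [Finset.sum_const, smul_eq_mul]
      _ ≤ (Pb.card + Mr.card) * k := Nat.mul_le_mul_right k (Finset.card_union_le _ _)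
      _ = k * (Pb.card + Mr.card) := Nat.mul_comm _ _
  have hka : k ≤ 3 * (Pa.card + Mr.card) := by
    have : k * k ≤ k * (3 * (Pa.card + Mr.card)) := by
      calc k * k ≤ 3 * (k * (Pa.card + Mr.card)) := le_trans hA (by omega)
        _ = k * (3 * (Pa.card + Mr.card)) := by ring
    exact Nat.le_of_mul_le_mul_left this hk
  have hkb : k ≤ 3 * (Pb.card + Mr.card) := by
    have hkk : k * k ≤ 3 * (k * k - A.card) := by omega
    have : k * k ≤ k * (3 * (Pb.card + Mr.card)) := by
      calc k * k ≤ 3 * (k * (Pb.card + Mr.card)) := le_trans hkk (by omega)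
        _ = k * (3 * (Pb.card + Mr.card)) := by ring
    exact Nat.le_of_mul_le_mul_left this hk
  constructor
  · have : 0 < Pa.card := by omega
    obtain ⟨ra, hra⟩ := Finset.card_pos.1 this
    exact ⟨ra, (Finset.mem_filter.1 hra).2⟩
  · have : 0 < Pb.card := by omega
    obtain ⟨rb, hrb⟩ := Finset.card_pos.1 this
    exact ⟨rb, (Finset.mem_filter.1 hrb).2⟩
end Counting

open Classical in
lemma grid_matching {k : ℕ} (hk : 0 < k) (A : Finset (Fin k × Fin k))
    (hA : k * k ≤ 3 * A.card) (hB : 3 * A.card ≤ 2 * (k * k)) :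
    ∃ x y : Fin (k / 6) → Fin k × Fin k,
      Function.Injective x ∧ Function.Injective y ∧
      (∀ i, x i ∈ A) ∧ (∀ i, y i ∉ A) ∧
      (∀ i j, (gridGraph k).Adj (x i) (y j) ↔ i = j) := by
  classical
  rcases counting A hk hA hB with hrow | ⟨⟨ra, hra⟩, ⟨rb, hrb⟩⟩
  · -- many mixed rows: horizontal pairs, line = fst
    refine construct A _ hrow Prod.fst ?_ ?_
    · intro a b h
      simp only [gridGraph] at h
      omega
    · intro r hr
      simp only [Finset.mem_filter, Finset.mem_univ, true_and] at hr
      obtain ⟨j0, hj0⟩ := rowc_pos_mem A hr.1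
      obtain ⟨j1, hj1⟩ := rowc_lt_mem A hr.2
      obtain ⟨s, t, hdist, hs, ht⟩ := cross_pair (fun j => (r, j) ∈ A) j0 j1 hj0 hj1
      refine ⟨(r, s), (r, t), ?_, hs, ht, rfl, rfl⟩
      simp only [gridGraph, Nat.dist_self]
      omega
  · -- pure rows on both sides: every column is mixed, line = snd
    have hcols : k ≤ 3 * (Finset.univ : Finset (Fin k)).card := by
      simp only [Finset.card_univ, Fintype.card_fin]
      omega
    refine construct A Finset.univ hcols Prod.snd ?_ ?_
    · intro a b h
      simp only [gridGraph] at h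
      omega
    · intro r _
      obtain ⟨s, t, hdist, hs, ht⟩ := cross_pair (fun i => (i, r) ∈ A) ra rb
        (rowc_eq_mem A hra r) (rowc_zero_mem A hrb r)
      refine ⟨(s, r), (t, r), ?_, hs, ht, rfl, rfl⟩
      simp only [gridGraph, Nat.dist_self]
      omega

/-- for all sufficiently large `k`, every balanced cut `{A, B}` of the
`k × k` grid (both sides of size at least `k²/3`) admits an induced matching of size
`⌊k/6⌋` across the cut, and consequently `ρ(A) ≥ ⌊k/6⌋` and `U(A) ≥ 2^⌊k/6⌋`
(so the boolean-width of the `k × k` grid is at least `k/6`). -/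
theorem grid_balanced_cut_induced_matching :
    ∃ k₀ : ℕ, ∀ k : ℕ, k₀ ≤ k → ∀ A : Finset (Fin k × Fin k),
      k * k ≤ 3 * A.card → 3 * A.card ≤ 2 * (k * k) →
      (∃ x y : Fin (k / 6) → Fin k × Fin k,
        Function.Injective x ∧ Function.Injective y ∧
        (∀ i, x i ∈ A) ∧ (∀ i, y i ∉ A) ∧
        (∀ i j, (gridGraph k).Adj (x i) (y j) ↔ i = j)) ∧
      k / 6 ≤ cutRank (gridGraph k) A ∧
      2 ^ (k / 6) ≤ unionCount (gridGraph k) A := by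
  refine ⟨6, fun k hk A hA hB => ?_⟩
  obtain ⟨x, y, hxi, hyi, hxA, hyA, hadj⟩ := grid_matching (by omega) A hA hB
  exact ⟨⟨x, y, hxi, hyi, hxA, hyA, hadj⟩,
    matching_rank (gridGraph k) A x y hxA hyA hadj,
    matching_union (gridGraph k) A x y hxA hyA hadj⟩
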